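/- Let F be a field, C, D ∈ M_n(F) commuting matrices, g ∈ F^n, and P, Q ∈ F[x,y]. Suppose X ∈ M_n(F) commutes with both C and D and satisfies g·Q(C,D) = g·X. Then (g·P(C,D))·X = g·Q(C,D)·P(C,D), i.e., the Blackburn attack recovers the shared key. -/
import Mathlib


/-- Evaluation of a bivariate polynomial at a pair of commuting matrices. -/
noncomputable def evalCD {F : Type*} [Field F] {n : ℕ}
    (C D : Matrix (Fin n) (Fin n) F) (P : MvPolynomial (Fin 2) F) :
    Matrix (Fin n) (Fin n) F :=
  ∑ d ∈ P.support, P.coeff d • (C ^ d 0 * D ^ d 1)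

theorem stmt_11 {F : Type*} [Field F] {n : ℕ}
    (C D : Matrix (Fin n) (Fin n) F) (hCD : Commute C D)
    (g : Fin n → F) (P Q : MvPolynomial (Fin 2) F)
    (X : Matrix (Fin n) (Fin n) F) (hXC : Commute X C) (hXD : Commute X D)
    (hgQ : Matrix.vecMul g (evalCD C D Q) = Matrix.vecMul g X) :
    Commute X (evalCD C D P) ∧
    Matrix.vecMul (Matrix.vecMul g (evalCD C D P)) X =
      Matrix.vecMul g (evalCD C D Q * evalCD C D P) := by
  have hcomm : Commute X (evalCD C D P) := by
    unfold evalCD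
    apply Commute.sum_right
    intro d _
    exact (((hXC.pow_right _).mul_right (hXD.pow_right _)).smul_right _)
  refine ⟨hcomm, ?_⟩
  rw [Matrix.vecMul_vecMul, ← hcomm.eq, ← Matrix.vecMul_vecMul, ← hgQ,
    Matrix.vecMul_vecMul]
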